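/- For every type T of object types and every T-signature S, the category of representations of S — whose objects are representations of S in monads on [T,Set] and whose morphisms are morphisms of representations — has an initial object. -/

import Mathlib

set_option autoImplicit false

universe u

/-- A monad (Kleisli triple) on the category `[T,Set]` of `T`-indexed families of types. -/
structure FMonad (T : Type u) where
  obj : (T → Type u) → T → Type u
  eta : ∀ {V : T → Type u} (t : T), V t → obj V t
  subst : ∀ {V W : T → Type u}, (∀ t, V t → obj W t) → ∀ t, obj V t → obj W t
  eta_subst : ∀ {V W : T → Type u} (f : ∀ t, V t → obj W t) (t : T) (v : V t),
    subst f t (eta t v) = f t v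
  subst_eta : ∀ {V : T → Type u} (t : T) (x : obj V t),
    subst (fun t v => eta t v) t x = x
  subst_subst : ∀ {V W X : T → Type u} (f : ∀ t, V t → obj W t)
    (g : ∀ t, W t → obj X t) (t : T) (x : obj V t),
    subst g t (subst f t x) = subst (fun t v => subst g t (f t v)) t x

/-- A module over the monad `P` with codomain `[T,Set]`. -/
structure FModF {T : Type u} (P : FMonad T) where
  obj : (T → Type u) → T → Type u
  subst : ∀ {V W : T → Type u}, (∀ t, V t → P.obj W t) → ∀ t, obj V t → obj W t
  subst_eta : ∀ {V : T → Type u} (t : T) (x : obj V t),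
    subst (fun t v => P.eta t v) t x = x
  subst_subst : ∀ {V W X : T → Type u} (f : ∀ t, V t → P.obj W t)
    (g : ∀ t, W t → P.obj X t) (t : T) (x : obj V t),
    subst g t (subst f t x) = subst (fun t v => P.subst g t (f t v)) t x

/-- A module over the monad `P` with codomain `Set` (the category of types). -/
structure FModS {T : Type u} (P : FMonad T) where
  obj : (T → Type u) → Type u
  subst : ∀ {V W : T → Type u}, (∀ t, V t → P.obj W t) → obj V → obj W
  subst_eta : ∀ {V : T → Type u} (x : obj V),
    subst (fun t v => P.eta t v) x = x
  subst_subst : ∀ {V W X : T → Type u} (f : ∀ t, V t → P.obj W t)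
    (g : ∀ t, W t → P.obj X t) (x : obj V),
    subst g (subst f x) = subst (fun t v => P.subst g t (f t v)) x

/-- Morphism of `P`-modules with codomain `[T,Set]`. -/
structure FModFHom {T : Type u} {P : FMonad T} (M N : FModF P) where
  app : ∀ (V : T → Type u) (t : T), M.obj V t → N.obj V t
  natural : ∀ {V W : T → Type u} (f : ∀ t, V t → P.obj W t) (t : T) (x : M.obj V t),
    app W t (M.subst f t x) = N.subst f t (app V t x)

/-- Morphism of `P`-modules with codomain `Set`. -/
structure FModSHom {T : Type u} {P : FMonad T} (M N : FModS P) where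
  app : ∀ (V : T → Type u), M.obj V → N.obj V
  natural : ∀ {V W : T → Type u} (f : ∀ t, V t → P.obj W t) (x : M.obj V),
    app W (M.subst f x) = N.subst f (app V x)

/-- Morphism of monads on `[T,Set]`. -/
structure FMonadHom {T : Type u} (P Q : FMonad T) where
  app : ∀ (V : T → Type u) (t : T), P.obj V t → Q.obj V t
  app_eta : ∀ {V : T → Type u} (t : T) (v : V t), app V t (P.eta t v) = Q.eta t v
  app_subst : ∀ {V W : T → Type u} (f : ∀ t, V t → P.obj W t) (t : T) (x : P.obj V t),
    app W t (P.subst f t x) = Q.subst (fun t v => app W t (f t v)) t (app V t x)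

/-- `Fresh a V` is the family `V` enriched with one fresh element of index `a`,
i.e. `V^{*a}`. -/
inductive Fresh {T : Type u} (a : T) (V : T → Type u) : T → Type u where
  | old : ∀ {t : T}, V t → Fresh a V t
  | new : Fresh a V a

/-- The shifted map `f^a : V^{*a} → P (W^{*a})`. -/
def fshift {T : Type u} (P : FMonad T) (a : T) {V W : T → Type u}
    (f : ∀ t, V t → P.obj W t) : ∀ t, Fresh a V t → P.obj (Fresh a W) t
  | _, .old v => P.subst (fun t w => P.eta t (Fresh.old w)) _ (f _ v)
  | _, .new => P.eta a Fresh.new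

theorem fshift_eta {T : Type u} (P : FMonad T) (a : T) (V : T → Type u) :
    fshift P a (fun t (v : V t) => P.eta t v) = fun t v => P.eta t v := by
  funext t x
  cases x with
  | old v => simp [fshift, P.eta_subst]
  | new => rfl

theorem fshift_comp {T : Type u} (P : FMonad T) (a : T) {V W X : T → Type u}
    (f : ∀ t, V t → P.obj W t) (g : ∀ t, W t → P.obj X t) (t : T) (x : Fresh a V t) :
    P.subst (fshift P a g) t (fshift P a f t x)
      = fshift P a (fun t v => P.subst g t (f t v)) t x := by
  cases x with
  | new => simp [fshift, P.eta_subst]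
  | old v =>
    simp only [fshift]
    rw [P.subst_subst, P.subst_subst]
    have h : (fun (t : T) (w : W t) =>
        P.subst (fshift P a g) t (P.eta t (Fresh.old w)))
        = fun (t : T) (w : W t) =>
            P.subst (fun t w => P.eta t (Fresh.old w)) t (g t w) := by
      funext t w
      rw [P.eta_subst]
      rfl
    rw [h]

/-- The derived module `M^a`. -/
def derMod {T : Type u} {P : FMonad T} (a : T) (M : FModF P) : FModF P where
  obj V := M.obj (Fresh a V)
  subst f := M.subst (fshift P a f)
  subst_eta := by
    intro V t x
    show M.subst (fshift P a fun t v => P.eta t v) t x = x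
    rw [fshift_eta]
    exact M.subst_eta t x
  subst_subst := by
    intro V W X f g t x
    show M.subst (fshift P a g) t (M.subst (fshift P a f) t x)
      = M.subst (fshift P a fun t v => P.subst g t (f t v)) t x
    rw [M.subst_subst]
    have h : (fun (t : T) (y : Fresh a V t) =>
        P.subst (fshift P a g) t (fshift P a f t y))
        = fshift P a (fun t v => P.subst g t (f t v)) := by
      funext t y
      exact fshift_comp P a f g t y
    rw [h]

/-- The fibre module `M_a`. -/
def fibMod {T : Type u} {P : FMonad T} (a : T) (M : FModF P) : FModS P where
  obj V := M.obj V a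
  subst f x := M.subst f a x
  subst_eta x := M.subst_eta a x
  subst_subst f g x := M.subst_subst f g a x

/-- The pullback of a `Q`-module (codomain `[T,Set]`) along a monad morphism. -/
def pbModF {T : Type u} {P Q : FMonad T} (h : FMonadHom P Q) (M : FModF Q) :
    FModF P where
  obj := M.obj
  subst f := M.subst (fun t v => h.app _ t (f t v))
  subst_eta := by
    intro V t x
    show M.subst (fun t v => h.app V t (P.eta t v)) t x = x
    have e : (fun (t : T) (v : V t) => h.app V t (P.eta t v))
        = fun t v => Q.eta t v := by
      funext t v; exact h.app_eta t v
    rw [e]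
    exact M.subst_eta t x
  subst_subst := by
    intro V W X f g t x
    show M.subst (fun t v => h.app X t (g t v)) t
        (M.subst (fun t v => h.app W t (f t v)) t x)
      = M.subst (fun t v => h.app X t (P.subst g t (f t v))) t x
    rw [M.subst_subst]
    have e : (fun (t : T) (v : V t) =>
        Q.subst (fun t v => h.app X t (g t v)) t (h.app W t (f t v)))
        = fun (t : T) (v : V t) => h.app X t (P.subst g t (f t v)) := by
      funext t v
      rw [h.app_subst]
    rw [e]

/-- The pullback of a `Q`-module (codomain `Set`) along a monad morphism. -/
def pbModS {T : Type u} {P Q : FMonad T} (h : FMonadHom P Q) (M : FModS Q) :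
    FModS P where
  obj := M.obj
  subst f x := M.subst (fun t v => h.app _ t (f t v)) x
  subst_eta := by
    intro V x
    show M.subst (fun t v => h.app V t (P.eta t v)) x = x
    have e : (fun (t : T) (v : V t) => h.app V t (P.eta t v))
        = fun t v => Q.eta t v := by
      funext t v; exact h.app_eta t v
    rw [e]
    exact M.subst_eta x
  subst_subst := by
    intro V W X f g x
    show M.subst (fun t v => h.app X t (g t v))
        (M.subst (fun t v => h.app W t (f t v)) x)
      = M.subst (fun t v => h.app X t (P.subst g t (f t v))) x
    rw [M.subst_subst]
    have e : (fun (t : T) (v : V t) =>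
        Q.subst (fun t v => h.app X t (g t v)) t (h.app W t (f t v)))
        = fun (t : T) (v : V t) => h.app X t (P.subst g t (f t v)) := by
      funext t v
      rw [h.app_subst]
    rw [e]

/-- `pow l V` is `V` enriched with fresh variables of types according to the list `l`,
written `V ** l`. -/
def pow {T : Type u} (l : List T) (V : T → Type u) : T → Type u :=
  match l with
  | [] => V
  | b :: bs => pow bs (Fresh b V)

/-- Multiple shifting `f^{s⃗}`. -/
def lshift {T : Type u} (P : FMonad T) :
    ∀ (l : List T) {V W : T → Type u},
      (∀ t, V t → P.obj W t) → ∀ t, pow l V t → P.obj (pow l W) t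
  | [], _, _, f => f
  | b :: bs, _, _, f => lshift P bs (fshift P b f)

/-- The carrier of the product module `(M^{s⃗₁})_{t₁} × ⋯ × (M^{s⃗ₙ})_{tₙ}`
associated to the argument list of an arity: a heterogeneous list. -/
inductive Args {T : Type u} (M : (T → Type u) → T → Type u) (V : T → Type u) :
    List (List T × T) → Type u where
  | nil : Args M V []
  | cons : ∀ {b : List T × T} {bs : List (List T × T)},
      M (pow b.1 V) b.2 → Args M V bs → Args M V (b :: bs)

/-- The module substitution of the product module associated to an argument list. -/
def argSubst {T : Type u} (P : FMonad T) {V W : T → Type u}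
    (f : ∀ t, V t → P.obj W t) :
    ∀ {l : List (List T × T)}, Args P.obj V l → Args P.obj W l
  | _, .nil => .nil
  | _, .cons (b := b) x xs => .cons (P.subst (lshift P b.1 f) b.2 x) (argSubst P f xs)

/-- A `T`-signature: a family of `T`-arities, indexed by some type.
An arity is a pair of a list of pairs `(s⃗, t)` and an output type `t₀`. -/
structure Signature (T : Type u) where
  idx : Type u
  ar : idx → List (List T × T) × T

/-- A representation of the signature `S`: a monad on `[T,Set]` together with,
for each arity of `S`, a module morphism from the associated product of derived
fibre modules to the fibre module over the output type. -/
structure Repres {T : Type u} (S : Signature T) where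
  mon : FMonad T
  rep : ∀ (i : S.idx) (V : T → Type u),
    Args mon.obj V (S.ar i).1 → mon.obj V (S.ar i).2
  rep_hom : ∀ (i : S.idx) {V W : T → Type u} (f : ∀ t, V t → mon.obj W t)
      (x : Args mon.obj V (S.ar i).1),
    rep i W (argSubst mon f x) = mon.subst f (S.ar i).2 (rep i V x)

/-- Componentwise application of a monad morphism to an argument list; this is
the product of the derived fibres of the module morphism induced by the monad
morphism. -/
def argApp {T : Type u} {P Q : FMonad T} (h : FMonadHom P Q) {V : T → Type u} :
    ∀ {l : List (List T × T)}, Args P.obj V l → Args Q.obj V l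
  | _, .nil => .nil
  | _, .cons (b := b) x xs => .cons (h.app (pow b.1 V) b.2 x) (argApp h xs)

/-- A morphism of representations: a monad morphism commuting with the
representation module morphisms. -/
structure RepresHom {T : Type u} {S : Signature T} (P Q : Repres S) where
  mh : FMonadHom P.mon Q.mon
  commute : ∀ (i : S.idx) (V : T → Type u) (x : Args P.mon.obj V (S.ar i).1),
    mh.app V (S.ar i).2 (P.rep i V x) = Q.rep i V (argApp mh x)
namespace InitRep
variable {T : Type u}

def Fresh.map {a : T} {X Y : T → Type u} (g : ∀ t, X t → Y t) :
    ∀ t, Fresh a X t → Fresh a Y t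
  | _, .old v => .old (g _ v)
  | _, .new => .new

def powMapL : ∀ (s : List T) {X Y : T → Type u}, (∀ t, X t → Y t) →
    ∀ t, pow s X t → pow s Y t
  | [], _, _, g => g
  | _ :: s', _, _, g => powMapL s' (Fresh.map g)

def powOld : ∀ (s : List T) {X : T → Type u} (t : T), X t → pow s X t
  | [], _, _, v => v
  | _ :: s', _, _, v => powOld s' _ (.old v)

inductive Idx : List T → T → Type u where
  | hd : ∀ {a : T} {s : List T}, Idx (a :: s) a
  | tl : ∀ {a t : T} {s : List T}, Idx s t → Idx (a :: s) t

def idxIn : ∀ {s : List T} {X : T → Type u} {t : T}, Idx s t → pow s X t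
  | a :: s', X, _, .hd => powOld s' _ (Fresh.new (a := a) (V := X))
  | _ :: s', X, t, .tl k => idxIn (s := s') (X := Fresh _ X) k

theorem idxIn_hd {a : T} {s' : List T} {X : T → Type u} :
    idxIn (s := a :: s') (X := X) Idx.hd = powOld s' _ (Fresh.new (a := a) (V := X)) := rfl

theorem idxIn_tl {a t : T} {s' : List T} {X : T → Type u} (k : Idx s' t) :
    idxIn (s := a :: s') (X := X) (Idx.tl k) = idxIn (X := Fresh a X) k := rfl

def psplit : ∀ (s : List T) {X : T → Type u} {t : T}, pow s X t → Sum (X t) (Idx s t)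
  | [], _, _, x => .inl x
  | _ :: s', _, _, x =>
    match psplit s' x with
    | .inl (.old v) => .inl v
    | .inl .new => .inr .hd
    | .inr k => .inr (.tl k)

theorem freshMap_comp {a : T} {X Y Z : T → Type u} (g : ∀ t, X t → Y t)
    (g' : ∀ t, Y t → Z t) (t : T) (x : Fresh a X t) :
    Fresh.map g' t (Fresh.map g t x) = Fresh.map (fun t x => g' t (g t x)) t x := by
  cases x <;> rfl

theorem freshMap_id {a : T} {X : T → Type u} (t : T) (x : Fresh a X t) :
    Fresh.map (fun _ x => x) t x = x := by
  cases x <;> rfl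

theorem powMapL_comp : ∀ (s : List T) {X Y Z : T → Type u} (g : ∀ t, X t → Y t)
    (g' : ∀ t, Y t → Z t) (t : T) (x : pow s X t),
    powMapL s g' t (powMapL s g t x) = powMapL s (fun t x => g' t (g t x)) t x
  | [], _, _, _, _, _, _, _ => rfl
  | a :: s', X, Y, Z, g, g', t, x => by
    simp only [powMapL]
    rw [powMapL_comp s' (Fresh.map g) (Fresh.map g') t x]
    congr 1
    funext t x
    exact freshMap_comp g g' t x

theorem powMapL_id : ∀ (s : List T) {X : T → Type u} (t : T) (x : pow s X t),
    powMapL s (fun _ x => x) t x = x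
  | [], _, _, _ => rfl
  | a :: s', X, t, x => by
    simp only [powMapL]
    have : (Fresh.map (a := a) (X := X) fun _ x => x) = fun _ x => x := by
      funext t x; exact freshMap_id t x
    rw [this]
    exact powMapL_id s' t x

theorem powMapL_powOld : ∀ (s : List T) {X Y : T → Type u} (g : ∀ t, X t → Y t)
    (t : T) (v : X t), powMapL s g t (powOld s t v) = powOld s t (g t v)
  | [], _, _, _, _, _ => rfl
  | a :: s', X, Y, g, t, v => by
    simp only [powMapL, powOld]
    rw [powMapL_powOld s' (Fresh.map g) t (.old v)]
    rfl

theorem powMapL_idxIn : ∀ {s : List T} {X Y : T → Type u} (g : ∀ t, X t → Y t)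
    {t : T} (k : Idx s t), powMapL s g t (idxIn k) = idxIn k
  | _ :: _, X, Y, g, _, .hd => by
    simp only [powMapL, idxIn_hd]
    rw [powMapL_powOld]
    rfl
  | _ :: _, X, Y, g, _, .tl k => by
    simp only [powMapL, idxIn_tl]
    exact powMapL_idxIn (Fresh.map g) k

theorem psplit_powOld : ∀ (s : List T) {X : T → Type u} (t : T) (v : X t),
    psplit s (powOld s t v) = .inl v
  | [], _, _, _ => rfl
  | a :: s', X, t, v => by
    simp only [psplit, powOld]
    rw [psplit_powOld s' t (Fresh.old v)]

theorem psplit_idxIn : ∀ {s : List T} {X : T → Type u} {t : T} (k : Idx s t),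
    psplit s (idxIn (X := X) k) = .inr k
  | _ :: _, X, _, .hd => by
    simp only [psplit, idxIn_hd]
    rw [psplit_powOld]
  | _ :: _, X, _, .tl k => by
    simp only [psplit, idxIn_tl]
    rw [psplit_idxIn k]

theorem psplit_eq : ∀ (s : List T) {X : T → Type u} {t : T} (x : pow s X t),
    Sum.elim (powOld s t) (idxIn (X := X)) (psplit s x) = x
  | [], _, _, _ => rfl
  | a :: s', X, t, x => by
    have IH := psplit_eq s' x
    simp only [psplit]
    rcases h : psplit s' x with v | k
    · rw [h] at IH
      cases v with
      | old v => exact IH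
      | new => exact IH
    · rw [h] at IH
      exact IH

theorem psplit_powMapL : ∀ (s : List T) {X Y : T → Type u} (g : ∀ t, X t → Y t)
    (t : T) (x : pow s X t),
    psplit s (powMapL s g t x) = Sum.map (g t) id (psplit s x)
  | [], _, _, _, _, _ => rfl
  | a :: s', X, Y, g, t, x => by
    simp only [psplit, powMapL]
    rw [psplit_powMapL s' (Fresh.map g) t x]
    rcases psplit s' x with v | k
    · cases v <;> rfl
    · rfl

end InitRep
namespace InitRep
variable {T : Type u}

@[reducible] def powc : List (List T) → (T → Type u) → T → Type u
  | [], V => V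
  | s :: ss, V => pow s (powc ss V)

mutual
inductive Pre (S : Signature T) (V : T → Type u) : List (List T) → T → Type u where
  | var : ∀ {c : List (List T)} {t : T}, powc c V t → Pre S V c t
  | op : ∀ {c : List (List T)} (i : S.idx),
      PreArgs S V c (S.ar i).1 → Pre S V c (S.ar i).2
inductive PreArgs (S : Signature T) (V : T → Type u) :
    List (List T) → List (List T × T) → Type u where
  | nil : ∀ {c : List (List T)}, PreArgs S V c []
  | cons : ∀ {c : List (List T)} {b : List T × T} {bs : List (List T × T)},
      Pre S V (b.1 :: c) b.2 → PreArgs S V c bs → PreArgs S V c (b :: bs)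
end

variable {S : Signature T}

mutual
def Pre.ren {V W : T → Type u} : ∀ {c c' : List (List T)},
    (∀ t, powc c V t → powc c' W t) → ∀ {t : T}, Pre S V c t → Pre S W c' t
  | _, _, g, t, .var x => .var (g t x)
  | _, _, g, _, .op i as => .op i (PreArgs.ren g as)
def PreArgs.ren {V W : T → Type u} : ∀ {c c' : List (List T)},
    (∀ t, powc c V t → powc c' W t) → ∀ {l : List (List T × T)},
    PreArgs S V c l → PreArgs S W c' l
  | _, _, _, _, .nil => .nil
  | _, _, g, _, .cons (b := b) x xs =>
      .cons (Pre.ren (c := b.1 :: _) (c' := b.1 :: _) (powMapL b.1 g) x) (PreArgs.ren g xs)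
end

def plift (s : List T) {V W : T → Type u} {c c' : List (List T)}
    (f : ∀ t, powc c V t → Pre S W c' t) :
    ∀ t, pow s (powc c V) t → Pre S W (s :: c') t :=
  fun t x =>
    match psplit s x with
    | .inl v => Pre.ren (c := c') (c' := s :: c') (fun t v => powOld s t v) (f t v)
    | .inr k => .var (idxIn k)

mutual
def Pre.sub {V W : T → Type u} : ∀ {c c' : List (List T)},
    (∀ t, powc c V t → Pre S W c' t) → ∀ {t : T}, Pre S V c t → Pre S W c' t
  | _, _, f, t, .var x => f t x
  | _, _, f, _, .op i as => .op i (PreArgs.sub f as)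
def PreArgs.sub {V W : T → Type u} : ∀ {c c' : List (List T)},
    (∀ t, powc c V t → Pre S W c' t) → ∀ {l : List (List T × T)},
    PreArgs S V c l → PreArgs S W c' l
  | _, _, _, _, .nil => .nil
  | _, _, f, _, .cons (b := b) x xs =>
      .cons (Pre.sub (c := b.1 :: _) (c' := b.1 :: _) (plift b.1 f) x) (PreArgs.sub f xs)
end

end InitRep
namespace InitRep
variable {T : Type u} {S : Signature T}

theorem powMapL_comp' (s : List T) {X Y Z : T → Type u} (g : ∀ t, X t → Y t)
    (g' : ∀ t, Y t → Z t) :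
    (fun t x => powMapL s g' t (powMapL s g t x)) = powMapL s (fun t x => g' t (g t x)) := by
  funext t x; exact powMapL_comp s g g' t x

mutual
theorem ren_ren : ∀ {V W U : T → Type u} {c c' c'' : List (List T)}
    (g : ∀ t, powc c V t → powc c' W t) (g' : ∀ t, powc c' W t → powc c'' U t)
    {t : T} (x : Pre S V c t),
    Pre.ren g' (Pre.ren g x) = Pre.ren (fun t v => g' t (g t v)) x
  | _, _, _, _, _, _, g, g', _, .var x => by simp only [Pre.ren]
  | _, _, _, _, _, _, g, g', _, .op i as => by
    simp only [Pre.ren]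
    rw [renArgs_ren g g' as]
theorem renArgs_ren : ∀ {V W U : T → Type u} {c c' c'' : List (List T)}
    (g : ∀ t, powc c V t → powc c' W t) (g' : ∀ t, powc c' W t → powc c'' U t)
    {l : List (List T × T)} (as : PreArgs S V c l),
    PreArgs.ren g' (PreArgs.ren g as) = PreArgs.ren (fun t v => g' t (g t v)) as
  | _, _, _, _, _, _, g, g', _, .nil => by simp only [PreArgs.ren]
  | _, _, _, _, _, _, g, g', _, .cons (b := b) x xs => by
    simp only [PreArgs.ren]
    rw [ren_ren (c := b.1 :: _) (c' := b.1 :: _) (c'' := b.1 :: _)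
        (powMapL b.1 g) (powMapL b.1 g') x,
      renArgs_ren g g' xs, powMapL_comp' b.1 g g']
end

mutual
theorem ren_id : ∀ {V : T → Type u} {c : List (List T)} {t : T} (x : Pre S V c t),
    Pre.ren (fun _ v => v) x = x
  | _, _, _, .var x => by simp only [Pre.ren]
  | _, _, _, .op i as => by
    simp only [Pre.ren]
    rw [renArgs_id as]
theorem renArgs_id : ∀ {V : T → Type u} {c : List (List T)} {l : List (List T × T)}
    (as : PreArgs S V c l), PreArgs.ren (fun _ v => v) as = as
  | _, _, _, .nil => by simp only [PreArgs.ren]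
  | V, c, _, .cons (b := b) x xs => by
    simp only [PreArgs.ren]
    have h : powMapL b.1 (X := powc c V) (Y := powc c V) (fun _ v => v) = fun _ v => v := by
      funext t x; exact powMapL_id b.1 t x
    rw [h, ren_id x, renArgs_id xs]
end

mutual
theorem sub_varren : ∀ {V W : T → Type u} {c c' : List (List T)}
    (g : ∀ t, powc c V t → powc c' W t) {t : T} (x : Pre S V c t),
    Pre.sub (fun t v => .var (g t v)) x = Pre.ren g x
  | _, _, _, _, g, _, .var x => by simp only [Pre.sub, Pre.ren]
  | _, _, _, _, g, _, .op i as => by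
    simp only [Pre.sub, Pre.ren]
    rw [subArgs_varren g as]
theorem subArgs_varren : ∀ {V W : T → Type u} {c c' : List (List T)}
    (g : ∀ t, powc c V t → powc c' W t) {l : List (List T × T)} (as : PreArgs S V c l),
    PreArgs.sub (fun t v => .var (g t v)) as = PreArgs.ren g as
  | _, _, _, _, g, _, .nil => by simp only [PreArgs.sub, PreArgs.ren]
  | _, _, _, _, g, _, .cons (b := b) x xs => by
    simp only [PreArgs.sub, PreArgs.ren]
    have h : plift b.1 (S := S) (fun t v => .var (g t v))
        = fun t v => Pre.var (powMapL b.1 g t v) := by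
      funext t x
      simp only [plift]
      rcases hs : psplit b.1 x with v | k
      · have hx := psplit_eq b.1 x
        rw [hs] at hx
        simp only [Sum.elim_inl] at hx
        subst hx
        simp only [Pre.ren, powMapL_powOld]
      · have hx := psplit_eq b.1 x
        rw [hs] at hx
        simp only [Sum.elim_inr] at hx
        subst hx
        rw [powMapL_idxIn]
    rw [h, sub_varren (c := b.1 :: _) (c' := b.1 :: _) (powMapL b.1 g) x,
      subArgs_varren g xs]
end

mutual
theorem sub_ren : ∀ {V W U : T → Type u} {c c' c'' : List (List T)}
    (g : ∀ t, powc c V t → powc c' W t) (f : ∀ t, powc c' W t → Pre S U c'' t)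
    {t : T} (x : Pre S V c t),
    Pre.sub f (Pre.ren g x) = Pre.sub (fun t v => f t (g t v)) x
  | _, _, _, _, _, _, g, f, _, .var x => by simp only [Pre.sub, Pre.ren]
  | _, _, _, _, _, _, g, f, _, .op i as => by
    simp only [Pre.sub, Pre.ren]
    rw [subArgs_ren g f as]
theorem subArgs_ren : ∀ {V W U : T → Type u} {c c' c'' : List (List T)}
    (g : ∀ t, powc c V t → powc c' W t) (f : ∀ t, powc c' W t → Pre S U c'' t)
    {l : List (List T × T)} (as : PreArgs S V c l),
    PreArgs.sub f (PreArgs.ren g as) = PreArgs.sub (fun t v => f t (g t v)) as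
  | _, _, _, _, _, _, g, f, _, .nil => by simp only [PreArgs.sub, PreArgs.ren]
  | _, _, _, _, _, _, g, f, _, .cons (b := b) x xs => by
    simp only [PreArgs.sub, PreArgs.ren]
    have h : (fun t v => plift b.1 f t (powMapL b.1 g t v))
        = plift b.1 (fun t v => f t (g t v)) := by
      funext t x
      simp only [plift]
      rw [psplit_powMapL b.1 g t x]
      rcases psplit b.1 x with v | k <;> rfl
    rw [sub_ren (c := b.1 :: _) (c' := b.1 :: _) (c'' := b.1 :: _)
        (powMapL b.1 g) (plift b.1 f) x, h, subArgs_ren g f xs]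
end

end InitRep
namespace InitRep
variable {T : Type u} {S : Signature T}

theorem plift_powOld {V W : T → Type u} {c c' : List (List T)} (s : List T)
    (f : ∀ t, powc c V t → Pre S W c' t) (t : T) (v : powc c V t) :
    plift s f t (powOld s t v)
      = Pre.ren (c := c') (c' := s :: c') (fun t v => powOld s t v) (f t v) := by
  simp only [plift, psplit_powOld]

theorem plift_idxIn {V W : T → Type u} {c c' : List (List T)} (s : List T)
    (f : ∀ t, powc c V t → Pre S W c' t) (t : T) (k : Idx s t) :
    plift s f t (idxIn k) = Pre.var (idxIn k) := by
  simp only [plift, psplit_idxIn]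

mutual
theorem ren_sub : ∀ {V W U : T → Type u} {c c' c'' : List (List T)}
    (f : ∀ t, powc c V t → Pre S W c' t) (g : ∀ t, powc c' W t → powc c'' U t)
    {t : T} (x : Pre S V c t),
    Pre.ren g (Pre.sub f x) = Pre.sub (fun t v => Pre.ren g (f t v)) x
  | _, _, _, _, _, _, f, g, _, .var x => by simp only [Pre.sub]
  | _, _, _, _, _, _, f, g, _, .op i as => by
    simp only [Pre.sub, Pre.ren]
    rw [renArgs_sub f g as]
theorem renArgs_sub : ∀ {V W U : T → Type u} {c c' c'' : List (List T)}
    (f : ∀ t, powc c V t → Pre S W c' t) (g : ∀ t, powc c' W t → powc c'' U t)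
    {l : List (List T × T)} (as : PreArgs S V c l),
    PreArgs.ren g (PreArgs.sub f as) = PreArgs.sub (fun t v => Pre.ren g (f t v)) as
  | _, _, _, _, _, _, f, g, _, .nil => by simp only [PreArgs.sub, PreArgs.ren]
  | _, _, _, _, _, _, f, g, _, .cons (b := b) x xs => by
    simp only [PreArgs.sub, PreArgs.ren]
    rw [ren_sub (c := b.1 :: _) (c' := b.1 :: _) (c'' := b.1 :: _) (plift b.1 f) (powMapL b.1 g) x, renArgs_sub f g xs]
    have h : (fun t v => Pre.ren (powMapL b.1 g) (plift b.1 f t v))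
        = plift b.1 (fun t v => Pre.ren g (f t v)) := by
      funext t x
      rcases hs : psplit b.1 x with v | k
        <;> have hx := psplit_eq b.1 x <;> rw [hs] at hx
        <;> simp only [Sum.elim_inl, Sum.elim_inr] at hx <;> subst hx
      · rw [plift_powOld, plift_powOld,
          ren_ren (c' := b.1 :: _) (c'' := b.1 :: _) (fun t v => powOld b.1 t v) (powMapL b.1 g) (f t v),
          ren_ren (c'' := b.1 :: _) g (fun t v => powOld b.1 t v) (f t v)]
        congr 1
        funext t w
        exact powMapL_powOld b.1 g t w
      · rw [plift_idxIn, plift_idxIn]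
        simp only [Pre.ren]
        rw [powMapL_idxIn]
    rw [h]
end

mutual
theorem sub_sub : ∀ {V W U : T → Type u} {c c' c'' : List (List T)}
    (f : ∀ t, powc c V t → Pre S W c' t) (h : ∀ t, powc c' W t → Pre S U c'' t)
    {t : T} (x : Pre S V c t),
    Pre.sub h (Pre.sub f x) = Pre.sub (fun t v => Pre.sub h (f t v)) x
  | _, _, _, _, _, _, f, h, _, .var x => by simp only [Pre.sub]
  | _, _, _, _, _, _, f, h, _, .op i as => by
    simp only [Pre.sub]
    rw [subArgs_sub f h as]
theorem subArgs_sub : ∀ {V W U : T → Type u} {c c' c'' : List (List T)}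
    (f : ∀ t, powc c V t → Pre S W c' t) (h : ∀ t, powc c' W t → Pre S U c'' t)
    {l : List (List T × T)} (as : PreArgs S V c l),
    PreArgs.sub h (PreArgs.sub f as) = PreArgs.sub (fun t v => Pre.sub h (f t v)) as
  | _, _, _, _, _, _, f, h, _, .nil => by simp only [PreArgs.sub]
  | _, _, _, _, _, _, f, h, _, .cons (b := b) x xs => by
    simp only [PreArgs.sub]
    rw [sub_sub (plift b.1 f) (plift b.1 h) x, subArgs_sub f h xs]
    have he : (fun t v => Pre.sub (plift b.1 h) (plift b.1 f t v))
        = plift b.1 (fun t v => Pre.sub h (f t v)) := by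
      funext t x
      rcases hs : psplit b.1 x with v | k
        <;> have hx := psplit_eq b.1 x <;> rw [hs] at hx
        <;> simp only [Sum.elim_inl, Sum.elim_inr] at hx <;> subst hx
      · rw [plift_powOld, plift_powOld,
          sub_ren (c := _) (c' := b.1 :: _) (c'' := b.1 :: _)
            (fun t v => powOld b.1 t v) (plift b.1 h) (f t v),
          ren_sub (c' := _) (c'' := b.1 :: _) h (fun t v => powOld b.1 t v) (f t v)]
        congr 1
        funext t w
        rw [plift_powOld]
      · rw [plift_idxIn, plift_idxIn]
        simp only [Pre.sub]
        rw [plift_idxIn]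
    rw [he]
end

def TmMon (S : Signature T) : FMonad T where
  obj V t := Pre S V [] t
  eta _ v := .var v
  subst f _ x := Pre.sub (c := []) (c' := []) f x
  eta_subst f t v := by simp only [Pre.sub]
  subst_eta t x := by
    have := sub_varren (S := S) (c := []) (c' := []) (fun _ v => v) x
    simp only [this, ren_id]
  subst_subst f g t x := sub_sub (c := []) (c' := []) (c'' := []) f g x

end InitRep
namespace InitRep
variable {T : Type u} {S : Signature T}

theorem lshift_plift : ∀ (s : List T) {V W : T → Type u}
    (f : ∀ t, V t → Pre S W [] t) (t : T) (x : pow s V t),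
    Pre.ren (V := pow s W) (W := W) (c := []) (c' := [s]) (fun _ v => v)
      (lshift (TmMon S) s f t x) = plift (c := []) (c' := []) s f t x
  | [], V, W, f, t, x => by
    simp only [lshift, plift, psplit]
    rfl
  | a :: s', V, W, f, t, x => by
    simp only [lshift]
    rw [show Pre.ren (V := pow (a :: s') W) (W := W) (c := []) (c' := [a :: s'])
        (fun _ v => v) (lshift (TmMon S) s' (fshift (TmMon S) a f) t x)
      = Pre.ren (V := Fresh a W) (W := W) (c := [s']) (c' := [a :: s'])
          (fun _ v => v)
        (Pre.ren (V := pow s' (Fresh a W)) (W := Fresh a W) (c := []) (c' := [s'])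
          (fun _ v => v) (lshift (TmMon S) s' (fshift (TmMon S) a f) t x))
      from (ren_ren (c := []) (c' := [s']) (c'' := [a :: s']) (fun _ v => v) (fun _ v => v) _).symm]
    rw [lshift_plift s' (fshift (TmMon S) a f) t x]
    simp only [plift, psplit]
    rcases hs : psplit s' (X := Fresh a V) x with v | k
    · cases v with
      | old v =>
        simp only [Pre.ren]
        erw [ren_ren (c := []) (c' := [s']) (c'' := [a :: s'])]
        have : fshift (TmMon S) a f t (.old v)
            = Pre.sub (c := []) (c' := [])
                (fun t w => Pre.var (V := Fresh a W) (c := []) (Fresh.old w)) (f t v) := rfl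
        erw [this, sub_varren (c := []) (c' := []) (fun t w => Fresh.old w) (f t v),
          ren_ren (c := []) (c' := []) (c'' := [a :: s'])]
        rfl
      | new =>
        simp only [Pre.ren]
        rw [show fshift (TmMon S) a f a .new
            = Pre.var (V := Fresh a W) (c := []) Fresh.new from rfl]
        simp only [Pre.ren]
        rfl
    · simp only [Pre.ren]
      rfl
end InitRep
namespace InitRep
variable {T : Type u} {S : Signature T}

def conv {V : T → Type u} {s : List T} {t : T} (x : Pre S (pow s V) [] t) :
    Pre S V [s] t :=
  Pre.ren (V := pow s V) (W := V) (c := []) (c' := [s]) (fun _ v => v) x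

def convArgs : ∀ {V : T → Type u} {l : List (List T × T)},
    Args (TmMon S).obj V l → PreArgs S V [] l
  | _, _, .nil => .nil
  | _, _, .cons (b := b) x xs => .cons (conv x) (convArgs xs)

theorem convArgs_argSubst {V W : T → Type u} (f : ∀ t, V t → Pre S W [] t) :
    ∀ {l : List (List T × T)} (xs : Args (TmMon S).obj V l),
    convArgs (argSubst (TmMon S) f xs) = PreArgs.sub (c := []) (c' := []) f (convArgs xs)
  | _, .nil => by simp only [argSubst, convArgs, PreArgs.sub]
  | _, .cons (b := b) x xs => by
    simp only [argSubst, convArgs, PreArgs.sub]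
    rw [convArgs_argSubst f xs]
    congr 1
    show Pre.ren (c := []) (c' := [b.1]) (fun _ v => v)
        (Pre.sub (c := []) (c' := []) (lshift (TmMon S) b.1 f) x)
      = Pre.sub (plift b.1 f) (conv x)
    rw [ren_sub (c := []) (c' := []) (c'' := [b.1])
        (lshift (TmMon S) b.1 f) (fun _ v => v) x]
    show _ = Pre.sub (c := [b.1]) (c' := [b.1]) (plift b.1 f)
      (Pre.ren (c := []) (c' := [b.1]) (fun _ v => v) x)
    rw [sub_ren (c := []) (c' := [b.1]) (c'' := [b.1])
        (fun _ v => v) (plift b.1 f) x]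
    congr 1
    funext t v
    exact lshift_plift b.1 f t v

def SynRep (S : Signature T) : Repres S where
  mon := TmMon S
  rep i V xs := .op i (convArgs xs)
  rep_hom i {V W} f xs := by
    show Pre.op i (convArgs (argSubst (TmMon S) f xs))
      = Pre.sub (c := []) (c' := []) f (Pre.op i (convArgs xs))
    simp only [Pre.sub]
    rw [convArgs_argSubst f xs]

end InitRep
namespace InitRep
variable {T : Type u} {S : Signature T}

mutual
def initT (R : Repres S) : ∀ {V : T → Type u} {c : List (List T)} {t : T},
    Pre S V c t → R.mon.obj (powc c V) t
  | _, _, _, .var x => R.mon.eta _ x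
  | _, c, _, .op i as => R.rep i _ (initA R as)
def initA (R : Repres S) : ∀ {V : T → Type u} {c : List (List T)}
    {l : List (List T × T)}, PreArgs S V c l → Args R.mon.obj (powc c V) l
  | _, _, _, .nil => .nil
  | _, _, _, .cons (b := b) x xs => .cons (initT R x) (initA R xs)
end

theorem fshift_eta_comp (P : FMonad T) {a : T} {X Y : T → Type u}
    (g : ∀ t, X t → Y t) (t : T) (x : Fresh a X t) :
    fshift P a (fun t v => P.eta t (g t v)) t x = P.eta t (Fresh.map g t x) := by
  cases x with
  | old v => simp only [fshift, Fresh.map, P.eta_subst]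
  | new => simp only [fshift, Fresh.map]

theorem lshift_eta (P : FMonad T) : ∀ (s : List T) {X Y : T → Type u}
    (g : ∀ t, X t → Y t) (t : T) (x : pow s X t),
    lshift P s (fun t v => P.eta t (g t v)) t x = P.eta t (powMapL s g t x)
  | [], _, _, _, _, _ => rfl
  | a :: s', X, Y, g, t, x => by
    simp only [lshift, powMapL]
    have h : fshift P a (fun t v => P.eta t (g t v))
        = fun t v => P.eta t (Fresh.map g t v) := by
      funext t v; exact fshift_eta_comp P g t v
    rw [h, lshift_eta P s' (Fresh.map g) t x]
    rfl

mutual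
theorem init_ren (R : Repres S) : ∀ {V W : T → Type u} {c c' : List (List T)}
    (g : ∀ t, powc c V t → powc c' W t) {t : T} (x : Pre S V c t),
    initT R (Pre.ren g x) = R.mon.subst (fun t v => R.mon.eta t (g t v)) t (initT R x)
  | _, _, _, _, g, _, .var x => by
    simp only [Pre.ren, initT]
    rw [R.mon.eta_subst]
  | _, _, _, _, g, _, .op i as => by
    simp only [Pre.ren, initT]
    rw [initA_ren R g as, R.rep_hom]
theorem initA_ren (R : Repres S) : ∀ {V W : T → Type u} {c c' : List (List T)}
    (g : ∀ t, powc c V t → powc c' W t) {l : List (List T × T)} (as : PreArgs S V c l),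
    initA R (PreArgs.ren g as)
      = argSubst R.mon (fun t v => R.mon.eta t (g t v)) (initA R as)
  | _, _, _, _, g, _, .nil => by simp only [PreArgs.ren, initA, argSubst]
  | _, _, _, _, g, _, .cons (b := b) x xs => by
    simp only [PreArgs.ren, initA, argSubst]
    rw [init_ren R (c := b.1 :: _) (c' := b.1 :: _) (powMapL b.1 g) x, initA_ren R g xs]
    congr 1
    have h : lshift R.mon b.1 (fun t v => R.mon.eta t (g t v))
        = fun t v => R.mon.eta t (powMapL b.1 g t v) := by
      funext t v; exact lshift_eta R.mon b.1 g t v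
    rw [h]
end

theorem plift_cons {V W : T → Type u} {c c' : List (List T)} (a : T) (s' : List T)
    (f : ∀ t, powc c V t → Pre S W c' t) (t : T)
    (x : pow s' (Fresh a (powc c V)) t) :
    plift (a :: s') f t x
      = Pre.ren (V := W) (W := W) (c := s' :: [a] :: c') (c' := (a :: s') :: c')
          (fun _ v => v)
          (plift s' (c := [a] :: c) (c' := [a] :: c') (plift (c := c) (c' := c') [a] f) t x) := by
  simp only [plift, psplit]
  rcases hs : psplit s' (X := Fresh a (powc c V)) x with v | k
  · cases v with
    | old v =>
      have hs' : psplit s' (X := powc ([a] :: c) V) x = _ := hs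
      simp only [plift, psplit, hs']
      erw [ren_ren (c := c') (c' := [a] :: c') (c'' := s' :: [a] :: c'),
        ren_ren (c := c') (c' := s' :: [a] :: c') (c'' := (a :: s') :: c')]
      rfl
    | new =>
      have hs' : psplit s' (X := powc ([a] :: c) V) x = _ := hs
      simp only [plift, psplit, Pre.ren, hs']
      rfl
  · have hs' : psplit s' (X := powc ([a] :: c) V) x = _ := hs
    simp only [Pre.ren, hs']
    rfl

theorem init_plift (R : Repres S) : ∀ (s : List T) {V W : T → Type u}
    {c c' : List (List T)} (f : ∀ t, powc c V t → Pre S W c' t) (t : T)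
    (x : pow s (powc c V) t),
    initT R (plift s f t x) = lshift R.mon s (fun t v => initT R (f t v)) t x
  | [], V, W, c, c', f, t, x => by
    simp only [plift, psplit, lshift]
    rw [init_ren R (c := c') (c' := [] :: c') (fun t v => powOld [] t v) (f t x)]
    exact R.mon.subst_eta (V := powc ([] :: c') W) t _
  | a :: s', V, W, c, c', f, t, x => by
    have hb := plift_cons (S := S) a s' f
    rw [hb t x, init_ren R (c := s' :: [a] :: c') (c' := (a :: s') :: c') (fun _ v => v) (plift s' (c := [a] :: c) (c' := [a] :: c') (plift [a] f) t x)]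
    refine (R.mon.subst_eta (V := powc ((a :: s') :: c') W) t _).trans ?_
    rw [init_plift R s' (c := [a] :: c) (c' := [a] :: c') (plift [a] f) t x]
    simp only [lshift]
    congr 1
    funext t w
    cases w with
    | old v =>
      show initT R (plift [a] f t (Fresh.old v)) = _
      have h1 : plift [a] f t (Fresh.old v)
          = Pre.ren (c := c') (c' := [a] :: c') (fun t v => powOld [a] t v) (f t v) := by
        simp only [plift, psplit]
      rw [h1, init_ren R (c := c') (c' := [a] :: c') (fun t v => powOld [a] t v) (f t v)]
      simp only [fshift]
      rfl
    | new =>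
      show initT R (plift [a] f a Fresh.new) = _
      have h1 : plift [a] f a Fresh.new
          = Pre.var (V := W) (c := [a] :: c') (idxIn Idx.hd) := by
        simp only [plift, psplit]
      rw [h1]
      simp only [initT, fshift]
      rfl

mutual
theorem init_sub (R : Repres S) : ∀ {V W : T → Type u} {c c' : List (List T)}
    (f : ∀ t, powc c V t → Pre S W c' t) {t : T} (x : Pre S V c t),
    initT R (Pre.sub f x) = R.mon.subst (fun t v => initT R (f t v)) t (initT R x)
  | _, _, _, _, f, _, .var x => by
    simp only [Pre.sub, initT]
    rw [R.mon.eta_subst]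
  | _, _, _, _, f, _, .op i as => by
    simp only [Pre.sub, initT]
    rw [initA_sub R f as, R.rep_hom]
theorem initA_sub (R : Repres S) : ∀ {V W : T → Type u} {c c' : List (List T)}
    (f : ∀ t, powc c V t → Pre S W c' t) {l : List (List T × T)} (as : PreArgs S V c l),
    initA R (PreArgs.sub f as)
      = argSubst R.mon (fun t v => initT R (f t v)) (initA R as)
  | _, _, _, _, f, _, .nil => by simp only [PreArgs.sub, initA, argSubst]
  | _, _, _, _, f, _, .cons (b := b) x xs => by
    simp only [PreArgs.sub, initA, argSubst]
    rw [init_sub R (c := b.1 :: _) (c' := b.1 :: _) (plift b.1 f) x, initA_sub R f xs]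
    congr 1
    have h : (fun t v => initT R (plift b.1 f t v))
        = lshift R.mon b.1 (fun t v => initT R (f t v)) := by
      funext t v; exact init_plift R b.1 f t v
    rw [h]
end

end InitRep
namespace InitRep
variable {T : Type u} {S : Signature T}

def initMH (R : Repres S) : FMonadHom (TmMon S) R.mon where
  app V t x := initT R (c := []) x
  app_eta := fun {V} t v => by
    show initT R (Pre.var (V := V) (c := []) v) = R.mon.eta t v
    simp only [initT]
  app_subst f t x := init_sub R (c := []) (c' := []) f x

theorem initT_conv (R : Repres S) {V : T → Type u} {s : List T} {t : T}
    (x : Pre S (pow s V) [] t) : initT R (conv x) = initT R x :=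
  (init_ren R (c := []) (c' := [s]) (fun _ v => v) x).trans
    (R.mon.subst_eta (V := powc [s] V) t _)

theorem initA_conv (R : Repres S) : ∀ {V : T → Type u} {l : List (List T × T)}
    (xs : Args (TmMon S).obj V l), initA R (convArgs xs) = argApp (initMH R) xs
  | _, _, .nil => by simp only [convArgs, initA, argApp]
  | _, _, .cons (b := b) x xs => by
    simp only [convArgs, initA, argApp]
    rw [initA_conv R xs]
    congr 1
    exact initT_conv R x

def initHom (R : Repres S) : RepresHom (SynRep S) R where
  mh := initMH R
  commute i V xs := by
    show initT R (.op i (convArgs xs)) = _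
    simp only [initT]
    rw [initA_conv R xs]
    rfl

def toArgs : ∀ {V : T → Type u} {c : List (List T)} {l : List (List T × T)},
    PreArgs S V c l → Args (TmMon S).obj (powc c V) l
  | _, _, _, .nil => .nil
  | _, _, _, .cons (b := b) x xs =>
      .cons (Pre.ren (c := b.1 :: _) (c' := []) (fun _ v => v) x) (toArgs xs)

theorem renArgs_conv : ∀ {V : T → Type u} {c : List (List T)} {l : List (List T × T)}
    (as : PreArgs S V c l),
    PreArgs.ren (V := V) (W := powc c V) (c := c) (c' := []) (fun _ v => v) as
      = convArgs (toArgs as)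
  | _, _, _, .nil => by simp only [PreArgs.ren, toArgs, convArgs]
  | V, c, _, .cons (b := b) x xs => by
    simp only [PreArgs.ren, toArgs, convArgs]
    rw [renArgs_conv xs]
    congr 1
    show Pre.ren (powMapL b.1 (fun _ v => v)) x
      = Pre.ren (c := []) (c' := [b.1]) (fun _ v => v)
          (Pre.ren (c := b.1 :: c) (c' := []) (fun _ v => v) x)
    rw [ren_ren (c := b.1 :: c) (c' := []) (c'' := [b.1]) (fun _ v => v) (fun _ v => v) x]
    have h : powMapL b.1 (X := powc c V) (Y := powc c V) (fun _ v => v)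
        = fun _ v => v := by
      funext t v; exact powMapL_id b.1 t v
    rw [h]

mutual
theorem uniq (R : Repres S) (h : RepresHom (SynRep S) R) :
    ∀ {V : T → Type u} {c : List (List T)} {t : T} (x : Pre S V c t),
    h.mh.app (powc c V) t
      (Pre.ren (V := V) (W := powc c V) (c := c) (c' := []) (fun _ v => v) x)
      = initT R x
  | _, _, _, .var x => by
    simp only [Pre.ren, initT]
    exact h.mh.app_eta _ x
  | _, _, _, .op i as => by
    simp only [Pre.ren, initT]
    rw [renArgs_conv as]
    rw [show Pre.op i (convArgs (toArgs as)) = (SynRep S).rep i _ (toArgs as) from rfl]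
    rw [h.commute i _ (toArgs as)]
    rw [uniqArgs R h as]
theorem uniqArgs (R : Repres S) (h : RepresHom (SynRep S) R) :
    ∀ {V : T → Type u} {c : List (List T)} {l : List (List T × T)}
    (as : PreArgs S V c l), argApp h.mh (toArgs as) = initA R as
  | _, _, _, .nil => by simp only [toArgs, argApp, initA]
  | _, _, _, .cons (b := b) x xs => by
    simp only [toArgs, argApp, initA]
    rw [uniqArgs R h xs]
    congr 1
    exact uniq R h (c := b.1 :: _) x
end

theorem fmonadHom_ext {P Q : FMonad T} {f g : FMonadHom P Q} (h : f.app = g.app) :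
    f = g := by
  cases f; cases g; cases h; rfl

theorem represHom_ext {P Q : Repres S} {f g : RepresHom P Q} (h : f.mh = g.mh) :
    f = g := by
  cases f; cases g; cases h; rfl

end InitRep

theorem representations_have_initial_object (T : Type u) (S : Signature T) :
    ∃ R₀ : Repres S, ∀ R : Repres S,
      Nonempty (RepresHom R₀ R) ∧ ∀ f g : RepresHom R₀ R, f = g := by
  refine ⟨InitRep.SynRep S, fun R => ⟨⟨InitRep.initHom R⟩, fun f g => ?_⟩⟩
  have key : ∀ (h : RepresHom (InitRep.SynRep S) R) (V : T → Type u) (t : T)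
      (x : InitRep.Pre S V [] t), h.mh.app V t x = InitRep.initT R x := by
    intro h V t x
    have hu := InitRep.uniq R h (c := []) x
    rwa [InitRep.ren_id x] at hu
  apply InitRep.represHom_ext
  apply InitRep.fmonadHom_ext
  funext V t x
  rw [key f V t x, key g V t x]
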